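/- Let T be a binary tree, n a natural number with 2^{-n} < ε·δ, and suppose μ([T]) > δ > 0. Define k = max{j ≤ 2^n : ∃l, |2^l \ T| ≥ j·2^{l−n}} (the maximum fraction, in units of 2^{-n}, of a level missing from T). Then k < 2^n, and if l witnesses the maximum, there exists σ ∈ T of length l with μ([T_σ]) > (1 − ε)·2^{-|σ|}. -/

import Mathlib

open MeasureTheory

/-- The length-`n` initial segment of `X ∈ 2^ω` as a finite binary string. -/
def initSeg (X : ℕ → Bool) (n : ℕ) : List Bool := List.ofFn fun i : Fin n => X i

/-- A binary tree: a set of finite binary strings closed under initial segments. -/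
def IsTree (T : Set (List Bool)) : Prop := ∀ σ ∈ T, ∀ τ : List Bool, τ <+: σ → τ ∈ T

/-- `[T]`: the set of infinite paths through `T`. -/
def paths (T : Set (List Bool)) : Set (ℕ → Bool) := {X | ∀ n, initSeg X n ∈ T}

/-- `T_σ`: the nodes of `T` comparable with `σ`. -/
def subtree (T : Set (List Bool)) (σ : List Bool) : Set (List Bool) :=
  {τ ∈ T | τ <+: σ ∨ σ <+: τ}

/-- `T ∩ 2^n`: the strings of length `n` in `T`. -/
def level (T : Set (List Bool)) (n : ℕ) : Set (List Bool) := {σ ∈ T | σ.length = n}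

/-- The basic cylinder determined by the string `σ`. -/
def cyl (σ : List Bool) : Set (ℕ → Bool) := {X | initSeg X σ.length = σ}

/-- `μ` is the uniform (coin-flipping) measure on Cantor space:
`μ([σ]) = 2^{-|σ|}` for every string `σ`. -/
def UniformOnCantor (μ : Measure (ℕ → Bool)) : Prop :=
  ∀ σ : List Bool, μ (cyl σ) = (2 : ENNReal)⁻¹ ^ σ.length

/-- A perfect tree: nonempty and every node has two incomparable extensions in the tree. -/
def IsPerfectTree (T : Set (List Bool)) : Prop :=
  T.Nonempty ∧ ∀ σ ∈ T, ∃ τ₀ ∈ T, ∃ τ₁ ∈ T,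
    σ <+: τ₀ ∧ σ <+: τ₁ ∧ ¬ τ₀ <+: τ₁ ∧ ¬ τ₁ <+: τ₀

/-! ### Auxiliary lemmas -/

section Aux

open scoped Classical

@[simp] lemma initSeg_length (X : ℕ → Bool) (n : ℕ) : (initSeg X n).length = n := by
  simp [initSeg]

lemma initSeg_prefix (X : ℕ → Bool) {m n : ℕ} (h : m ≤ n) : initSeg X m <+: initSeg X n := by
  obtain ⟨c, rfl⟩ := Nat.exists_eq_add_of_le h
  refine ⟨List.ofFn fun j : Fin c => X (m + j), ?_⟩
  simp only [initSeg]
  conv_rhs => rw [List.ofFn_add]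
  rfl

lemma mem_cyl_initSeg (X : ℕ → Bool) (n : ℕ) : X ∈ cyl (initSeg X n) := by
  simp [cyl, initSeg]

lemma cyl_eq (σ : List Bool) :
    cyl σ = ⋂ i : Fin σ.length, (fun X : ℕ → Bool => X i) ⁻¹' {σ.get i} := by
  ext X
  simp only [cyl, Set.mem_setOf_eq, Set.mem_iInter, Set.mem_preimage, Set.mem_singleton_iff]
  constructor
  · intro h i
    have h2 := List.get_of_eq h.symm i
    simp only [initSeg, List.get_ofFn] at h2
    simpa using h2.symm
  · intro h
    apply List.ext_get (by simp)
    intro i h1 h2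
    simp [initSeg, List.get_ofFn, h ⟨i, h2⟩]

lemma cyl_measurable (σ : List Bool) : MeasurableSet (cyl σ) := by
  rw [cyl_eq]
  exact MeasurableSet.iInter fun i => measurable_pi_apply _ (MeasurableSet.singleton _)

lemma cyl_disjoint {σ τ : List Bool} (hl : σ.length = τ.length) (h : σ ≠ τ) :
    Disjoint (cyl σ) (cyl τ) := by
  rw [Set.disjoint_left]
  intro X hσ hτ
  exact h (by rw [← hσ, ← hτ, hl])

/-- all strings of length `L` -/
noncomputable def strFinset (L : ℕ) : Finset (List Bool) :=
  (Finset.univ : Finset (Fin L → Bool)).image List.ofFn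

lemma mem_strFinset {L : ℕ} {σ : List Bool} : σ ∈ strFinset L ↔ σ.length = L := by
  simp only [strFinset, Finset.mem_image, Finset.mem_univ, true_and]
  constructor
  · rintro ⟨f, rfl⟩; simp
  · rintro rfl
    exact ⟨σ.get, List.ofFn_get σ⟩

lemma card_strFinset (L : ℕ) : (strFinset L).card = 2 ^ L := by
  rw [strFinset, Finset.card_image_of_injective _ (fun f g h => List.ofFn_inj.mp h)]
  simp

/-- extensions of σ by m bits -/
noncomputable def extFinset (σ : List Bool) (m : ℕ) : Finset (List Bool) :=
  (strFinset m).image (σ ++ ·)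

lemma mem_extFinset {σ τ : List Bool} {m : ℕ} :
    τ ∈ extFinset σ m ↔ σ <+: τ ∧ τ.length = σ.length + m := by
  simp only [extFinset, Finset.mem_image, mem_strFinset]
  constructor
  · rintro ⟨t, ht, rfl⟩; exact ⟨⟨t, rfl⟩, by simp [ht]⟩
  · rintro ⟨⟨t, rfl⟩, hl⟩
    exact ⟨t, by simpa using hl, rfl⟩

lemma card_extFinset (σ : List Bool) (m : ℕ) : (extFinset σ m).card = 2 ^ m := by
  rw [extFinset, Finset.card_image_of_injective _ (fun a b h => by simpa using h),
    card_strFinset]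

lemma strFinset_decomp (l m : ℕ) :
    strFinset (l + m) = (strFinset l).biUnion (fun σ => extFinset σ m) := by
  ext τ
  simp only [mem_strFinset, Finset.mem_biUnion, mem_extFinset]
  constructor
  · intro h
    exact ⟨τ.take l, by simp [h], ⟨τ.drop l, by simp⟩, by rw [List.length_take]; omega⟩
  · rintro ⟨σ, hσ, _, h⟩; omega

lemma extFinset_pairwiseDisjoint (l m : ℕ) :
    (↑(strFinset l) : Set (List Bool)).PairwiseDisjoint (fun σ => extFinset σ m) := by
  intro σ hσ τ hτ hne
  simp only [Finset.coe_sort_coe, Function.onFun]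
  rw [Finset.disjoint_left]
  intro ρ h1 h2
  rw [mem_extFinset] at h1 h2
  simp only [Finset.mem_coe, mem_strFinset] at hσ hτ
  exact hne (List.prefix_iff_eq_take.mp h1.1 ▸ (List.prefix_iff_eq_take.mp h2.1 ▸ by rw [hσ, hτ]))

/-- level-`L` nodes of a set `S`, as a finset -/
noncomputable def levF (S : Set (List Bool)) (L : ℕ) : Finset (List Bool) :=
  (strFinset L).filter (· ∈ S)

lemma mem_levF {S : Set (List Bool)} {L : ℕ} {σ : List Bool} :
    σ ∈ levF S L ↔ σ ∈ S ∧ σ.length = L := by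
  simp [levF, mem_strFinset, and_comm]

/-- the missing strings at level L -/
noncomputable def missF (T : Set (List Bool)) (L : ℕ) : Finset (List Bool) :=
  (strFinset L).filter (· ∉ T)

lemma mem_missF {T : Set (List Bool)} {L : ℕ} {σ : List Bool} :
    σ ∈ missF T L ↔ σ ∉ T ∧ σ.length = L := by
  simp [missF, mem_strFinset, and_comm]

lemma ncard_eq_missF (T : Set (List Bool)) (L : ℕ) :
    ({σ : List Bool | σ.length = L} \ T).ncard = (missF T L).card := by
  rw [← Set.ncard_coe_finset]
  congr 1
  ext σ
  simp [missF, mem_strFinset, Set.mem_diff, and_comm]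

lemma card_levF_add_missF (T : Set (List Bool)) (L : ℕ) :
    (levF T L).card + (missF T L).card = 2 ^ L := by
  rw [← card_strFinset L, levF, missF, Finset.card_filter_add_card_filter_not]

lemma subtree_isTree {T : Set (List Bool)} (hT : IsTree T) (σ : List Bool) :
    IsTree (subtree T σ) := by
  rintro τ ⟨hτT, hcomp⟩ ρ hρ
  refine ⟨hT τ hτT ρ hρ, ?_⟩
  rcases hcomp with h | h
  · exact Or.inl (hρ.trans h)
  · rcases List.prefix_or_prefix_of_prefix hρ h with h' | h'
    · exact Or.inl h'
    · exact Or.inr h'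

lemma levF_subtree_eq {T : Set (List Bool)} {σ : List Bool} {l : ℕ} (hl : σ.length = l)
    (m : ℕ) :
    levF (subtree T σ) (l + m) = (extFinset σ m).filter (· ∈ T) := by
  ext τ
  simp only [mem_levF, Finset.mem_filter, mem_extFinset, subtree, Set.mem_setOf_eq, hl]
  constructor
  · rintro ⟨⟨hτT, hcomp⟩, hlen⟩
    refine ⟨⟨?_, hlen⟩, hτT⟩
    rcases hcomp with h | h
    · have hle := h.length_le
      have : τ = σ := h.eq_of_length (by omega)
      exact this ▸ List.prefix_refl τ
    · exact h
  · rintro ⟨⟨hpre, hlen⟩, hτT⟩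
    exact ⟨⟨hτT, Or.inr hpre⟩, hlen⟩

lemma missF_card_decomp {T : Set (List Bool)} (l m : ℕ) :
    (missF T (l + m)).card
      = ∑ σ ∈ strFinset l, ((extFinset σ m).filter (· ∉ T)).card := by
  rw [missF, strFinset_decomp, Finset.filter_biUnion, Finset.card_biUnion]
  intro σ hσ τ hτ hne
  exact Finset.disjoint_filter_filter (extFinset_pairwiseDisjoint l m hσ hτ hne)

lemma ext_filter_notMem {T : Set (List Bool)} {σ : List Bool} (hT : IsTree T) (hσ : σ ∉ T)
    (m : ℕ) : ((extFinset σ m).filter (· ∉ T)).card = 2 ^ m := by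
  rw [← card_extFinset σ m]
  congr 1
  rw [Finset.filter_eq_self]
  intro τ hτ hτT
  exact hσ (hT τ hτT σ (mem_extFinset.mp hτ).1)

lemma ext_filter_mem_card {T : Set (List Bool)} {σ : List Bool} {l : ℕ} (hl : σ.length = l)
    (m : ℕ) :
    ((extFinset σ m).filter (· ∉ T)).card + (levF (subtree T σ) (l + m)).card = 2 ^ m := by
  rw [levF_subtree_eq hl, ← card_extFinset σ m, add_comm]
  exact Finset.card_filter_add_card_filter_not (fun τ => τ ∈ T)

lemma levF_growth {S : Set (List Bool)} (hS : IsTree S) (L : ℕ) :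
    (levF S (L + 1)).card ≤ 2 * (levF S L).card := by
  have hsub : levF S (L + 1) ⊆
      ((levF S L) ×ˢ (Finset.univ : Finset Bool)).image (fun p => p.1 ++ [p.2]) := by
    intro τ hτ
    rw [mem_levF] at hτ
    have hne : τ ≠ [] := fun h => by simp [h] at hτ
    simp only [Finset.mem_image, Finset.mem_product, Finset.mem_univ, and_true]
    refine ⟨(τ.dropLast, τ.getLast hne), mem_levF.mpr ⟨?_, ?_⟩, List.dropLast_append_getLast hne⟩
    · exact hS τ hτ.1 _ ⟨[τ.getLast hne], List.dropLast_append_getLast hne⟩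
    · rw [List.length_dropLast, hτ.2]; omega
  calc (levF S (L + 1)).card ≤ _ := Finset.card_le_card hsub
    _ ≤ ((levF S L) ×ˢ (Finset.univ : Finset Bool)).card := Finset.card_image_le
    _ = 2 * (levF S L).card := by simp [Finset.card_product, mul_comm]

lemma levF_growth_iter {S : Set (List Bool)} (hS : IsTree S) (L b : ℕ) :
    (levF S (L + b)).card ≤ 2 ^ b * (levF S L).card := by
  induction b with
  | zero => simp
  | succ b ih =>
    calc (levF S (L + (b + 1))).card = (levF S ((L + b) + 1)).card := by ring_nf
      _ ≤ 2 * (levF S (L + b)).card := levF_growth hS _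
      _ ≤ 2 * (2 ^ b * (levF S L).card) := by omega
      _ = 2 ^ (b + 1) * (levF S L).card := by ring

lemma measure_cylUnion {μ : Measure (ℕ → Bool)} (hμ : UniformOnCantor μ) {L : ℕ}
    {s : Finset (List Bool)} (hs : ∀ σ ∈ s, σ.length = L) :
    μ (⋃ σ ∈ s, cyl σ) = s.card * (2 : ENNReal)⁻¹ ^ L := by
  rw [measure_biUnion_finset ?_ (fun σ _ => cyl_measurable σ)]
  · rw [Finset.sum_congr rfl (fun σ hσ => by rw [hμ σ, hs σ hσ])]
    simp [Finset.sum_const, nsmul_eq_mul]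
  · intro σ hσ τ hτ hne
    exact cyl_disjoint ((hs σ hσ).trans (hs τ hτ).symm) hne

lemma paths_subset_levUnion {S : Set (List Bool)} (L : ℕ) :
    paths S ⊆ ⋃ σ ∈ levF S L, cyl σ := by
  intro X hX
  exact Set.mem_biUnion (mem_levF.mpr ⟨hX L, initSeg_length X L⟩) (mem_cyl_initSeg X L)

lemma measure_paths_le {μ : Measure (ℕ → Bool)} {S : Set (List Bool)}
    (hμ : UniformOnCantor μ) (L : ℕ) :
    μ (paths S) ≤ (levF S L).card * (2 : ENNReal)⁻¹ ^ L := by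
  refine le_trans (measure_mono (paths_subset_levUnion L)) ?_
  rw [measure_cylUnion hμ (fun σ hσ => (mem_levF.mp hσ).2)]

lemma paths_eq_iInter {S : Set (List Bool)} (hS : IsTree S) (l : ℕ) :
    paths S = ⋂ m : ℕ, ⋃ σ ∈ levF S (l + m), cyl σ := by
  ext X
  simp only [Set.mem_iInter]
  constructor
  · intro hX m
    exact paths_subset_levUnion (l + m) hX
  · intro h n
    obtain ⟨σ, hσ, hXσ⟩ := Set.mem_iUnion₂.mp (h n)
    rw [mem_levF] at hσ
    have hinit : initSeg X (l + n) = σ := by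
      have := hXσ
      rwa [cyl, Set.mem_setOf_eq, hσ.2] at this
    exact hS _ (hinit ▸ hσ.1) _ (initSeg_prefix X (by omega))

lemma measure_paths_eq_iInf {μ : Measure (ℕ → Bool)} {S : Set (List Bool)}
    (hμ : UniformOnCantor μ) (hS : IsTree S) (l : ℕ) :
    μ (paths S) = ⨅ m : ℕ, (levF S (l + m)).card * (2 : ENNReal)⁻¹ ^ (l + m) := by
  rw [paths_eq_iInter hS l]
  rw [Directed.measure_iInter ?_ ?_ ?_]
  · exact iInf_congr fun m => measure_cylUnion hμ (fun σ hσ => (mem_levF.mp hσ).2)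
  · exact fun m => (Finset.measurableSet_biUnion _ (fun σ _ => cyl_measurable σ)).nullMeasurableSet
  · refine Antitone.directed_ge (antitone_nat_of_succ_le fun m => ?_)
    intro X hX
    obtain ⟨σ, hσ, hXσ⟩ := Set.mem_iUnion₂.mp hX
    rw [mem_levF] at hσ
    have hinit : initSeg X (l + (m + 1)) = σ := by
      rwa [cyl, Set.mem_setOf_eq, hσ.2] at hXσ
    have hmem : initSeg X (l + m) ∈ S :=
      hS _ (hinit ▸ hσ.1) _ (initSeg_prefix X (by omega))
    exact Set.mem_biUnion (mem_levF.mpr ⟨hmem, initSeg_length X _⟩) (mem_cyl_initSeg X _)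
  · refine ⟨0, ?_⟩
    rw [measure_cylUnion hμ (fun σ hσ => (mem_levF.mp hσ).2)]
    exact ENNReal.mul_ne_top (ENNReal.natCast_ne_top _) (by simp [ENNReal.inv_ne_top])

lemma half_pow_mul (L : ℕ) : ((2 : ℝ)⁻¹) ^ L * 2 ^ L = 1 := by
  rw [← mul_pow]; norm_num

lemma cast_cyl (c L : ℕ) :
    (c : ENNReal) * (2 : ENNReal)⁻¹ ^ L = ENNReal.ofReal (c * ((2 : ℝ)⁻¹) ^ L) := by
  rw [ENNReal.ofReal_mul (by positivity), ENNReal.ofReal_natCast, ENNReal.ofReal_pow (by norm_num)]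
  congr 2
  rw [ENNReal.ofReal_inv_of_pos (by norm_num)]
  norm_num

lemma real_density {l m : ℕ} {d c : ℝ}
    (h : d * ((2 : ℝ)⁻¹) ^ (l + m) < c * ((2 : ℝ)⁻¹) ^ l) : d < c * 2 ^ m := by
  have h1 := mul_lt_mul_of_pos_right h (show (0 : ℝ) < 2 ^ (l + m) by positivity)
  rw [mul_assoc, half_pow_mul, mul_one] at h1
  have h2 : c * ((2 : ℝ)⁻¹) ^ l * 2 ^ (l + m) = c * 2 ^ m := by
    rw [pow_add,
      show c * ((2 : ℝ)⁻¹) ^ l * ((2 : ℝ) ^ l * 2 ^ m)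
        = c * ((((2 : ℝ)⁻¹) ^ l * 2 ^ l) * 2 ^ m) from by ring, half_pow_mul, one_mul]
  rwa [h2] at h1

lemma paths_subset_subtrees {T : Set (List Bool)} (l : ℕ) :
    paths T ⊆ ⋃ σ ∈ levF T l, paths (subtree T σ) := by
  intro X hX
  refine Set.mem_biUnion (mem_levF.mpr ⟨hX l, initSeg_length X l⟩) ?_
  intro n
  refine ⟨hX n, ?_⟩
  rcases le_total n l with h | h
  · exact Or.inl (initSeg_prefix X h)
  · exact Or.inr (initSeg_prefix X h)

end Aux

/-- The finitary density argument: with `2^{-n} < ε·δ` and `μ([T]) > δ`, the maximal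
`k ≤ 2^n` such that some level `l` misses at least `k·2^{l-n}` strings satisfies
`k < 2^n`, and any witnessing level `l` contains a node of density `> 1 - ε`.
(The inequality `|2^l \ T| ≥ j·2^{l-n}` is stated integrally as
`j·2^l ≤ 2^n·|2^l \ T|`.) -/
theorem stmt19 (μ : Measure (ℕ → Bool)) (hμ : UniformOnCantor μ)
    (T : Set (List Bool)) (hT : IsTree T) (ε δ : ℝ) (n : ℕ)
    (hδ : 0 < δ) (hn : (2 : ℝ)⁻¹ ^ n < ε * δ)
    (hpos : ENNReal.ofReal δ < μ (paths T))
    (k : ℕ)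
    (hk : k = sSup {j : ℕ | j ≤ 2 ^ n ∧ ∃ l : ℕ,
      j * 2 ^ l ≤ 2 ^ n * ({σ : List Bool | σ.length = l} \ T).ncard}) :
    k < 2 ^ n ∧
      ∀ l : ℕ, k * 2 ^ l ≤ 2 ^ n * ({σ : List Bool | σ.length = l} \ T).ncard →
        ∃ σ ∈ T, σ.length = l ∧
          ENNReal.ofReal ((1 - ε) * (2 : ℝ)⁻¹ ^ l) < μ (paths (subtree T σ)) := by
  classical
  -- the lower bound on level counts coming from the measure
  have hlow : ∀ L : ℕ, δ * 2 ^ L < ((levF T L).card : ℝ) := by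
    intro L
    have h1 : ENNReal.ofReal δ < ENNReal.ofReal (((levF T L).card : ℝ) * ((2 : ℝ)⁻¹) ^ L) := by
      rw [← cast_cyl]
      exact lt_of_lt_of_le hpos (measure_paths_le hμ L)
    have h2 : δ < ((levF T L).card : ℝ) * ((2 : ℝ)⁻¹) ^ L :=
      (ENNReal.ofReal_lt_ofReal_iff_of_nonneg hδ.le).mp h1
    have h3 := mul_lt_mul_of_pos_right h2 (show (0 : ℝ) < 2 ^ L by positivity)
    rwa [mul_assoc, half_pow_mul, mul_one] at h3
  set J : Set ℕ := {j : ℕ | j ≤ 2 ^ n ∧ ∃ l : ℕ,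
      j * 2 ^ l ≤ 2 ^ n * ({σ : List Bool | σ.length = l} \ T).ncard} with hJ
  have hJne : J.Nonempty := ⟨0, by simp, 0, by simp⟩
  have hJbdd : BddAbove J := ⟨2 ^ n, fun j hj => hj.1⟩
  have hkmem : k ∈ J := hk ▸ Nat.sSup_mem hJne hJbdd
  -- Part 1 : k < 2^n
  have part1 : k < 2 ^ n := by
    rcases lt_or_eq_of_le hkmem.1 with h | h
    · exact h
    · exfalso
      obtain ⟨l₀, hl₀⟩ := hkmem.2
      rw [ncard_eq_missF, h] at hl₀
      have hM : 2 ^ l₀ ≤ (missF T l₀).card := Nat.le_of_mul_le_mul_left hl₀ (by positivity)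
      have hLM := card_levF_add_missF T l₀
      have hMle : (missF T l₀).card ≤ 2 ^ l₀ := by omega
      have hL0 : (levF T l₀).card = 0 := by omega
      have hlt := hlow l₀
      rw [hL0] at hlt
      push_cast at hlt
      nlinarith [pow_pos (show (0:ℝ) < 2 by norm_num) l₀]
  refine ⟨part1, ?_⟩
  -- Part 2
  intro l hyp
  rw [ncard_eq_missF] at hyp
  by_contra hcon
  push_neg at hcon
  have hcon' : ∀ σ ∈ levF T l,
      μ (paths (subtree T σ)) ≤ ENNReal.ofReal ((1 - ε) * (2 : ℝ)⁻¹ ^ l) := by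
    intro σ hσ
    rw [mem_levF] at hσ
    exact hcon σ hσ.1 hσ.2
  -- the level-l tree nodes are nonempty
  have hLpos : 0 < (levF T l).card := by
    rcases Nat.eq_zero_or_pos (levF T l).card with h | h
    · exfalso
      have hlt := hlow l
      rw [h] at hlt
      push_cast at hlt
      nlinarith [pow_pos (show (0:ℝ) < 2 by norm_num) l]
    · exact h
  rcases le_or_gt 1 ε with hε1 | hε1
  · -- if ε ≥ 1, every subtree has measure 0, contradicting μ(paths T) > δ > 0
    have hz : ∀ σ ∈ levF T l, μ (paths (subtree T σ)) = 0 := by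
      intro σ hσ
      have h0 : (1 - ε) * (2 : ℝ)⁻¹ ^ l ≤ 0 :=
        mul_nonpos_of_nonpos_of_nonneg (by linarith) (by positivity)
      have := hcon' σ hσ
      rwa [ENNReal.ofReal_eq_zero.mpr h0, le_zero_iff] at this
    have hμ0 : μ (paths T) = 0 := by
      refine le_antisymm ?_ (zero_le)
      refine le_trans (measure_mono (paths_subset_subtrees l)) ?_
      refine le_trans (measure_biUnion_finset_le _ _) ?_
      rw [Finset.sum_congr rfl hz]
      simp
    rw [hμ0] at hpos
    exact absurd hpos (by simp)
  · -- main case : ε < 1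
    set θ : ℝ := ε - (2 : ℝ)⁻¹ ^ n / δ with hθdef
    have hbpos : (0:ℝ) < (2 : ℝ)⁻¹ ^ n := by positivity
    have hθpos : 0 < θ := by
      have : (2 : ℝ)⁻¹ ^ n / δ < ε := (div_lt_iff₀ hδ).mpr hn
      simpa [hθdef] using sub_pos.mpr this
    have hεθ : ε - θ = (2 : ℝ)⁻¹ ^ n / δ := by ring
    have hεθpos : 0 < ε - θ := by rw [hεθ]; positivity
    have hc2pos : 0 < 1 - ε + θ := by linarith
    -- extract a witnessing level for each σ
    have hext : ∀ σ ∈ levF T l, ∃ m : ℕ,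
        ((levF (subtree T σ) (l + m)).card : ℝ) < (1 - ε + θ) * 2 ^ m := by
      intro σ hσ
      rw [mem_levF] at hσ
      have h1 := hcon' σ (mem_levF.mpr hσ)
      rw [measure_paths_eq_iInf hμ (subtree_isTree hT σ) l] at h1
      have h2 : (⨅ m : ℕ, ((levF (subtree T σ) (l + m)).card : ENNReal)
          * (2 : ENNReal)⁻¹ ^ (l + m)) < ENNReal.ofReal ((1 - ε + θ) * (2 : ℝ)⁻¹ ^ l) := by
        refine lt_of_le_of_lt h1 ?_
        rw [ENNReal.ofReal_lt_ofReal_iff (by positivity)]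
        have hp : (0:ℝ) < (2 : ℝ)⁻¹ ^ l := by positivity
        nlinarith [mul_pos hθpos hp]
      rw [iInf_lt_iff] at h2
      obtain ⟨m, hm⟩ := h2
      refine ⟨m, ?_⟩
      rw [cast_cyl] at hm
      have h3 := (ENNReal.ofReal_lt_ofReal_iff_of_nonneg (by positivity)).mp hm
      exact real_density h3
    choose! f hf using hext
    set m : ℕ := (levF T l).sup f with hm
    -- propagate the bound to the common level m
    have hbound : ∀ σ ∈ levF T l,
        ((levF (subtree T σ) (l + m)).card : ℝ) < (1 - ε + θ) * 2 ^ m := by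
      intro σ hσ
      have hfm : f σ ≤ m := Finset.le_sup hσ
      have hgrow := levF_growth_iter (subtree_isTree hT σ) (l + f σ) (m - f σ)
      have heq : l + f σ + (m - f σ) = l + m := by omega
      rw [heq] at hgrow
      have h1 : ((levF (subtree T σ) (l + m)).card : ℝ)
          ≤ 2 ^ (m - f σ) * ((levF (subtree T σ) (l + f σ)).card : ℝ) := by
        exact_mod_cast hgrow
      have h2 := hf σ hσ
      have h3 : (0:ℝ) < 2 ^ (m - f σ) := by positivity
      have h4 : (2:ℝ) ^ (m - f σ) * ((1 - ε + θ) * 2 ^ (f σ)) = (1 - ε + θ) * 2 ^ m := by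
        rw [show (1 - ε + θ) * (2:ℝ) ^ m = (1 - ε + θ) * ((2:ℝ) ^ (m - f σ) * 2 ^ (f σ)) from ?_]
        · ring
        · rw [← pow_add, show m - f σ + f σ = m from by omega]
      nlinarith
    -- per-σ lower bound on missing extensions
    have hmiss : ∀ σ ∈ levF T l,
        (ε - θ) * 2 ^ m < ((((extFinset σ m).filter (· ∉ T)).card : ℝ)) := by
      intro σ hσ
      have hlen : σ.length = l := (mem_levF.mp hσ).2
      have hsum := ext_filter_mem_card (T := T) hlen m
      have hb := hbound σ hσ
      have : (((extFinset σ m).filter (· ∉ T)).card : ℝ)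
          = 2 ^ m - ((levF (subtree T σ) (l + m)).card : ℝ) := by
        have := congrArg (fun x : ℕ => (x : ℝ)) hsum
        push_cast at this
        linarith
      rw [this]
      linarith
    -- count the missing strings at level l + m
    have hdecomp := missF_card_decomp (T := T) l m
    have hsplit := Finset.sum_filter_add_sum_filter_not (strFinset l) (· ∈ T)
      (fun σ => ((extFinset σ m).filter (· ∉ T)).card)
    have hmissconst : ∑ σ ∈ (strFinset l).filter (· ∉ T),
        ((extFinset σ m).filter (· ∉ T)).card = (missF T l).card * 2 ^ m := by
      rw [Finset.sum_congr rfl (fun σ hσ => ext_filter_notMem hT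
        (by rw [Finset.mem_filter] at hσ; exact hσ.2) m)]
      simp [missF, mul_comm]
    have hlevsum : ((levF T l).card : ℝ) * ((ε - θ) * 2 ^ m)
        < ∑ σ ∈ levF T l, (((extFinset σ m).filter (· ∉ T)).card : ℝ) := by
      have := Finset.sum_lt_sum_of_nonempty (Finset.card_pos.mp hLpos)
        (f := fun _ => (ε - θ) * 2 ^ m)
        (g := fun σ => (((extFinset σ m).filter (· ∉ T)).card : ℝ)) hmiss
      simpa [Finset.sum_const, nsmul_eq_mul, mul_assoc] using this
    -- assemble
    have hA : ((missF T (l + m)).card : ℝ)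
        = (∑ σ ∈ levF T l, (((extFinset σ m).filter (· ∉ T)).card : ℝ))
          + ((missF T l).card : ℝ) * 2 ^ m := by
      rw [hdecomp, ← hsplit, hmissconst]
      push_cast
      rfl
    -- the real inequality
    have hPn : (0:ℝ) < 2 ^ n := by positivity
    have hPl : (0:ℝ) < 2 ^ l := by positivity
    have hPm : (0:ℝ) < 2 ^ m := by positivity
    have hF3 : (k : ℝ) * 2 ^ l ≤ (2:ℝ) ^ n * ((missF T l).card : ℝ) := by exact_mod_cast hyp
    have hF4 : δ * 2 ^ l < ((levF T l).card : ℝ) := hlow l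
    have hkey : ((k : ℝ) + 1) * (2 ^ l * 2 ^ m) < (2:ℝ) ^ n * ((missF T (l + m)).card : ℝ) := by
      have e1 : (2:ℝ) ^ n * (δ * 2 ^ l * ((ε - θ) * 2 ^ m)) = 2 ^ l * 2 ^ m := by
        rw [hεθ, div_eq_mul_inv,
          show (2:ℝ) ^ n * (δ * 2 ^ l * ((2:ℝ)⁻¹ ^ n * δ⁻¹ * 2 ^ m))
            = ((2:ℝ)⁻¹ ^ n * 2 ^ n) * (δ * δ⁻¹) * (2 ^ l * 2 ^ m) from by ring,
          half_pow_mul, mul_inv_cancel₀ (ne_of_gt hδ)]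
        ring
      have g1 : (2:ℝ) ^ l * 2 ^ m < 2 ^ n
          * (∑ σ ∈ levF T l, (((extFinset σ m).filter (· ∉ T)).card : ℝ)) := by
        rw [← e1]
        have s1 : δ * 2 ^ l * ((ε - θ) * 2 ^ m) < ((levF T l).card : ℝ) * ((ε - θ) * 2 ^ m) :=
          mul_lt_mul_of_pos_right hF4 (by positivity)
        have s2 := s1.trans hlevsum
        exact mul_lt_mul_of_pos_left s2 hPn
      have g2 : (k : ℝ) * (2 ^ l * 2 ^ m)
          ≤ (2:ℝ) ^ n * (((missF T l).card : ℝ) * 2 ^ m) := by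
        have h := mul_le_mul_of_nonneg_right hF3 hPm.le
        calc (k : ℝ) * (2 ^ l * 2 ^ m) = (k : ℝ) * 2 ^ l * 2 ^ m := by ring
          _ ≤ (2:ℝ) ^ n * ((missF T l).card : ℝ) * 2 ^ m := h
          _ = (2:ℝ) ^ n * (((missF T l).card : ℝ) * 2 ^ m) := by ring
      rw [hA]
      have hd : (2:ℝ) ^ n * ((∑ σ ∈ levF T l, (((extFinset σ m).filter (· ∉ T)).card : ℝ))
            + ((missF T l).card : ℝ) * 2 ^ m)
          = (2:ℝ) ^ n * (∑ σ ∈ levF T l, (((extFinset σ m).filter (· ∉ T)).card : ℝ))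
            + (2:ℝ) ^ n * (((missF T l).card : ℝ) * 2 ^ m) := by ring
      linarith [g1, g2, hd]
    have hnat : (k + 1) * 2 ^ (l + m) ≤ 2 ^ n * (missF T (l + m)).card := by
      have : ((k + 1) * 2 ^ (l + m) : ℝ) ≤ ((2 ^ n * (missF T (l + m)).card : ℕ) : ℝ) := by
        push_cast
        rw [pow_add]
        linarith [hkey]
      exact_mod_cast this
    have hk1 : k + 1 ∈ J := by
      refine ⟨part1, l + m, ?_⟩
      rwa [ncard_eq_missF]
    have hle : k + 1 ≤ sSup J := le_csSup hJbdd hk1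
    rw [← hk] at hle
    omega
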